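/- δ^(k)(x) * δ^(l)(x) = 0 for all k, l ∈ ℕ₀. -/

import Mathlib

open MeasureTheory Filter Topology Set

noncomputable section

/-- Distributions, modelled as functionals; distributional identities are
tested against smooth compactly supported test functions via `dEq`. -/
abbrev SDist : Type := (ℝ → ℂ) → ℂ

/-- Test functions: smooth and compactly supported. -/
def IsTest (t : ℝ → ℂ) : Prop := ContDiff ℝ (⊤ : ℕ∞) t ∧ HasCompactSupport t

/-- The regular distribution associated to a function. -/
def ofFun (f : ℝ → ℂ) : SDist := fun t => ∫ x, f x * t x

/-- Distributional derivative. -/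
def Dop (F : SDist) : SDist := fun t => - F (deriv t)

/-- Iterated distributional derivative. -/
def Dn (n : ℕ) (F : SDist) : SDist := Dop^[n] F

/-- `deltaD n x₀` is the n-th derivative of the Dirac delta at `x₀`. -/
def deltaD (n : ℕ) (x₀ : ℝ) : SDist := fun t => (-1 : ℂ) ^ n * iteratedDeriv n t x₀

/-- Equality of distributions (tested on test functions). -/
def dEq (F G : SDist) : Prop := ∀ t, IsTest t → F t = G t

/-- Equality of (restrictions of) distributions on a set Ω. -/
def dEqOn (Ω : Set ℝ) (F G : SDist) : Prop :=
  ∀ t, IsTest t → tsupport t ⊆ Ω → F t = G t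

/-- Dual product of a distribution by a smooth function. -/
def mulSmooth (f : ℝ → ℂ) (F : SDist) : SDist := fun t => F (fun x => f x * t x)

/-- `shift ε F` is the distribution `F(· + ε)`. -/
def shift (ε : ℝ) (F : SDist) : SDist := fun t => F (fun x => t (x - ε))

/-- The Hörmander product of distributions with disjoint singular supports:
`P` is the product of `F` and `G` iff near every point one of the factors is
(given by) a smooth function and `P` is locally the corresponding dual product. -/
def IsHProd (F G P : SDist) : Prop :=
  ∀ x : ℝ, ∃ Ω : Set ℝ, IsOpen Ω ∧ x ∈ Ω ∧
    ((∃ f, ContDiff ℝ (⊤ : ℕ∞) f ∧ dEqOn Ω F (ofFun f) ∧ dEqOn Ω P (mulSmooth f G)) ∨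
     (∃ g, ContDiff ℝ (⊤ : ℕ∞) g ∧ dEqOn Ω G (ofFun g) ∧ dEqOn Ω P (mulSmooth g F)))

/-- The product `*` of the paper: `P = F * G` iff
`P = lim_{ε↓0} F(x)·G(x+ε)` in the distributional sense, where `·` is the
Hörmander product. -/
def IsStar (F G P : SDist) : Prop :=
  ∃ Q : ℝ → SDist,
    (∀ᶠ ε in 𝓝[>] (0 : ℝ), IsHProd F (shift ε G) (Q ε)) ∧
    ∀ t, IsTest t → Tendsto (fun ε => Q ε t) (𝓝[>] (0 : ℝ)) (𝓝 (P t))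

/-- Piecewise smooth functions: smooth off a finite set, with finite lateral
limits of all derivatives at the exceptional points. -/
def PiecewiseSmooth (f : ℝ → ℂ) : Prop :=
  ∃ I : Finset ℝ, ContDiffOn ℝ (⊤ : ℕ∞) f ((I : Set ℝ)ᶜ) ∧
    ∀ x₀ ∈ I, ∀ j : ℕ,
      (∃ l, Tendsto (iteratedDeriv j f) (𝓝[<] x₀) (𝓝 l)) ∧
      (∃ l, Tendsto (iteratedDeriv j f) (𝓝[>] x₀) (𝓝 l))

/-- The space 𝒜: piecewise smooth functions together with all their
distributional derivatives. -/
def memA (F : SDist) : Prop :=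
  ∃ (f : ℝ → ℂ) (k : ℕ), PiecewiseSmooth f ∧ dEq F (Dn k (ofFun f))

/-- Heaviside step function. -/
def Heav : ℝ → ℂ := fun x => if 0 < x then 1 else 0

/-- `H₋ = 1 - H`. -/
def HeavM : ℝ → ℂ := fun x => 1 - Heav x

/-- The open cell `Ω_i = (x_i, x_{i+1})` (with `x_0 = -∞`, `x_{m+1} = +∞`)
determined by the points `x 0 < … < x (m-1)`. -/
def cell (m : ℕ) (x : Fin m → ℝ) (i : Fin (m + 1)) : Set ℝ :=
  {y | (∀ j : Fin m, (j : ℕ) < (i : ℕ) → x j < y) ∧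
       ∀ j : Fin m, (i : ℕ) ≤ (j : ℕ) → y < x j}

/-- The distribution `Σᵢ fᵢ χ_{Ωᵢ} + Σᵢⱼ cᵢⱼ δ^{(j)}(x - xᵢ)`. -/
def repDist (m n : ℕ) (x : Fin m → ℝ) (f : Fin (m + 1) → ℝ → ℂ)
    (c : Fin m → Fin (n + 1) → ℂ) : SDist :=
  fun t => (∑ i : Fin (m + 1), ofFun ((cell m x i).indicator (f i)) t)
    + ∑ i : Fin m, ∑ j : Fin (n + 1), c i j * deltaD (j : ℕ) (x i) t

/-- `G = D̃_I F`, the modified derivative `D̃_I F = DF + Σ_{x₀∈I} (F*δ_{x₀} − δ_{x₀}*F)`. -/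
def IsDtilde (I : Finset ℝ) (F G : SDist) : Prop :=
  ∃ P Q : ℝ → SDist,
    (∀ x₀ ∈ I, IsStar F (deltaD 0 x₀) (P x₀) ∧ IsStar (deltaD 0 x₀) F (Q x₀)) ∧
    dEq G (fun t => Dop F t + ∑ x₀ ∈ I, (P x₀ t - Q x₀ t))

/-- `G = D̃_I^k F`, the k-th iterate of the modified derivative. -/
def IsDtildeN (I : Finset ℝ) : ℕ → SDist → SDist → Prop
  | 0, F, G => dEq F G
  | k + 1, F, G => ∃ M, IsDtildeN I k F M ∧ IsDtilde I M G

/-- `G = Γ̂^{(j)} F = F*δ^{(j)} − δ^{(j)}*F`. -/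
def IsGammaN (j : ℕ) (F G : SDist) : Prop :=
  ∃ P Q, IsStar F (deltaD j 0) P ∧ IsStar (deltaD j 0) F Q ∧
    dEq G (fun t => P t - Q t)

/-- `Fh = F̂ ψ`, the interface operator
`F̂ψ = Σ_{i<m,j<n} (A_{ij} D^i δ̂₋ D^j − B_{ij} D^i δ̂₊ D^j) ψ`,
where `δ̂₋ G = G*δ` and `δ̂₊ G = δ*G`. -/
def IsFhat (m n : ℕ) (A B : Fin m → Fin n → ℂ) (ψ Fh : SDist) : Prop :=
  ∃ P Q : Fin n → SDist,
    (∀ j : Fin n, IsStar (Dn (j : ℕ) ψ) (deltaD 0 0) (P j) ∧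
      IsStar (deltaD 0 0) (Dn (j : ℕ) ψ) (Q j)) ∧
    dEq Fh (fun t => ∑ i : Fin m, ∑ j : Fin n,
      (A i j * Dn (i : ℕ) (P j) t - B i j * Dn (i : ℕ) (Q j) t))

/-- `g` is the family of L² representatives of the distributional derivatives of
`ψ` up to order `n`; this expresses `ψ ∈ W₂ⁿ(ℝ)`. -/
def SobRep (n : ℕ) (ψ : ℝ → ℂ) (g : ℕ → ℝ → ℂ) : Prop :=
  g 0 = ψ ∧ ∀ i ≤ n, MemLp (g i) 2 volume ∧ dEq (Dn i (ofFun ψ)) (ofFun (g i))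

lemma iteratedDeriv_zero_fun (n : ℕ) :
    iteratedDeriv n (fun _ : ℝ => (0 : ℂ)) = fun _ => (0 : ℂ) := by
  induction n with
  | zero => simp [iteratedDeriv_zero]
  | succ n ih => rw [iteratedDeriv_succ', deriv_const']; exact ih

lemma iteratedDeriv_zero_of_nmem_tsupport {t : ℝ → ℂ} {c : ℝ} (h : c ∉ tsupport t) (n : ℕ) :
    iteratedDeriv n t c = 0 := by
  have hev : t =ᶠ[𝓝 c] (fun _ => (0 : ℂ)) := by
    filter_upwards [(isClosed_tsupport t).isOpen_compl.mem_nhds h] with x hx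
    exact image_eq_zero_of_notMem_tsupport hx
  rw [hev.iteratedDeriv_eq n, iteratedDeriv_zero_fun]

/-- δ^(k)(x) * δ^(l)(x) = 0 for all k, l ∈ ℕ₀. -/
theorem delta_star_delta (k l : ℕ) :
    IsStar (deltaD k 0) (deltaD l 0) (0 : SDist) := by
  refine ⟨fun _ => (0 : SDist), ?_, ?_⟩
  · filter_upwards [self_mem_nhdsWithin] with ε hε
    have hε' : (0:ℝ) < ε := hε
    intro x
    by_cases hx : x = -ε
    · refine ⟨{0}ᶜ, isOpen_compl_singleton, by simp [hx]; linarith,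
        Or.inl ⟨0, contDiff_const, ?_, ?_⟩⟩
      · intro t _ hsupp
        have h0 : (0:ℝ) ∉ tsupport t := fun h => (hsupp h) rfl
        simp [deltaD, ofFun, iteratedDeriv_zero_of_nmem_tsupport h0]
      · intro t _ _
        show (0 : ℂ) = deltaD l 0 (fun y => (0:ℂ) * t (y - ε))
        have : (fun y => (0:ℂ) * t (y - ε)) = fun _ => (0:ℂ) := by funext y; simp
        simp [deltaD, this, iteratedDeriv_zero_fun]
    · refine ⟨{-ε}ᶜ, isOpen_compl_singleton, hx,
        Or.inr ⟨0, contDiff_const, ?_, ?_⟩⟩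
      · intro t _ hsupp
        have h0 : (-ε:ℝ) ∉ tsupport t := fun h => (hsupp h) rfl
        show deltaD l 0 (fun y => t (y - ε)) = _
        have : iteratedDeriv l (fun y => t (y - ε)) 0 = 0 := by
          have hev : (fun y => t (y - ε)) =ᶠ[𝓝 (0:ℝ)] (fun _ => (0:ℂ)) := by
            have hmem : {y : ℝ | y - ε ∈ (tsupport t)ᶜ} ∈ 𝓝 (0:ℝ) := by
              have hc : Continuous fun y : ℝ => y - ε := by fun_prop
              refine hc.continuousAt.preimage_mem_nhds ?_
              have : (0:ℝ) - ε = -ε := by ring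
              rw [this]
              exact (isClosed_tsupport t).isOpen_compl.mem_nhds h0
            filter_upwards [hmem] with y hy
            exact image_eq_zero_of_notMem_tsupport hy
          rw [hev.iteratedDeriv_eq l, iteratedDeriv_zero_fun]
        simp [deltaD, ofFun, this]
      · intro t _ _
        show (0 : ℂ) = deltaD k 0 (fun y => (0:ℂ) * t y)
        have : (fun y => (0:ℂ) * t y) = fun _ => (0:ℂ) := by funext y; simp
        simp [deltaD, this, iteratedDeriv_zero_fun]
  · intro t _
    exact tendsto_const_nhds
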